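/- The number of binary sequences of length n that contain a fixed binary sequence s of length m ≤ n as a (not necessarily contiguous) subsequence equals the number of binary sequences of length n containing at least m zeroes, namely the sum over l from m to n of binomial(n, l). -/

import Mathlib

open Finset

lemma cons_sublist_cons_ne {a b : Bool} {s l : List Bool} (hab : a ≠ b) :
    (a::s).Sublist (b::l) ↔ (a::s).Sublist l := by
  constructor
  · intro h
    cases h with
    | cons _ h => exact h
    | cons_cons => exact absurd rfl hab
  · exact fun h => h.cons _

lemma ofFn_cons (n : ℕ) (b : Bool) (T : Fin n → Bool) :
    List.ofFn (Fin.cons b T) = b :: List.ofFn T := by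
  simp [List.ofFn_succ]

lemma step (n : ℕ) (a : Bool) (s : List Bool) :
    (univ.filter fun S : Fin (n+1) → Bool => (a::s).Sublist (List.ofFn S)).card
      = (univ.filter fun S : Fin n → Bool => s.Sublist (List.ofFn S)).card
        + (univ.filter fun S : Fin n → Bool => (a::s).Sublist (List.ofFn S)).card := by
  have key : (univ.filter fun S : Fin (n+1) → Bool => (a::s).Sublist (List.ofFn S))
      = ((univ.filter fun S : Fin n → Bool => s.Sublist (List.ofFn S)).image (Fin.cons a))
        ∪ ((univ.filter fun S : Fin n → Bool => (a::s).Sublist (List.ofFn S)).image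
            (Fin.cons (!a))) := by
    ext S
    simp only [mem_filter, mem_union, mem_image, mem_univ, true_and]
    constructor
    · intro hS
      have hdec : S = Fin.cons (S 0) (fun i => S i.succ) := by
        ext i
        refine Fin.cases ?_ ?_ i <;> simp
      by_cases h0 : S 0 = a
      · left
        refine ⟨fun i => S i.succ, ?_, ?_⟩
        · have := hS
          rw [hdec, ofFn_cons, h0] at this
          exact (List.cons_sublist_cons).mp this
        · ext i
          refine Fin.cases ?_ ?_ i <;> simp [h0]
      · right
        refine ⟨fun i => S i.succ, ?_, ?_⟩
        · have := hS
          rw [hdec, ofFn_cons] at this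
          exact (cons_sublist_cons_ne (fun h => h0 h.symm)).mp this
        · ext i
          refine Fin.cases ?_ ?_ i <;> simp
          cases a <;> revert h0 <;> cases S 0 <;> simp
    · rintro (⟨T, hT, rfl⟩ | ⟨T, hT, rfl⟩)
      · rw [ofFn_cons]
        exact List.cons_sublist_cons.mpr hT
      · rw [ofFn_cons]
        exact hT.cons _
  rw [key, card_union_of_disjoint, card_image_of_injective _ (Fin.cons_right_injective _),
    card_image_of_injective _ (Fin.cons_right_injective _)]
  · rw [disjoint_left]
    rintro S hS1 hS2
    simp only [mem_image] at hS1 hS2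
    obtain ⟨T1, _, h1⟩ := hS1
    obtain ⟨T2, _, h2⟩ := hS2
    have e1 : S 0 = a := by rw [← h1]; simp
    have e2 : S 0 = !a := by rw [← h2]; simp
    have : a = !a := e1.symm.trans e2
    cases a <;> simp at this

lemma icc_map_succ (n m : ℕ) :
    Finset.Icc (m+1) (n+1) = (Finset.Icc m n).map ⟨Nat.succ, Nat.succ_injective⟩ := by
  ext k
  simp only [Finset.mem_map, Finset.mem_Icc, Function.Embedding.coeFn_mk, Nat.succ_eq_add_one]
  constructor
  · intro hk; exact ⟨k - 1, by omega, by omega⟩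
  · rintro ⟨j, hj, rfl⟩; omega

lemma pascal_sum (n m : ℕ) :
    ∑ l ∈ Finset.Icc (m+1) (n+1), (n+1).choose l
      = ∑ l ∈ Finset.Icc m n, n.choose l + ∑ l ∈ Finset.Icc (m+1) n, n.choose l := by
  have hmap : ∀ f : ℕ → ℕ, ∑ l ∈ Finset.Icc (m+1) (n+1), f l
      = ∑ l ∈ Finset.Icc m n, f (l+1) := by
    intro f
    rw [icc_map_succ, Finset.sum_map]
    rfl
  rw [hmap]
  simp_rw [Nat.choose_succ_succ n]
  rw [Finset.sum_add_distrib]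
  congr 1
  rw [← hmap]
  by_cases h : m ≤ n
  · rw [← Finset.Ico_add_one_right_eq_Icc, Finset.sum_Ico_succ_top (by omega), Finset.Ico_add_one_right_eq_Icc,
      Nat.choose_eq_zero_of_lt (by omega), add_zero]
  · rw [Finset.Icc_eq_empty (by omega), Finset.Icc_eq_empty (by omega)]

lemma aux : ∀ (n : ℕ) (s : List Bool),
    (univ.filter fun S : Fin n → Bool => s.Sublist (List.ofFn S)).card
      = ∑ l ∈ Finset.Icc s.length n, n.choose l := by
  intro n
  induction n with
  | zero =>
    intro s
    cases s with
    | nil => simp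
    | cons a t =>
      rw [Finset.Icc_eq_empty (by simp)]
      simp
  | succ n ih =>
    intro s
    cases s with
    | nil =>
      rw [List.length_nil, show Finset.Icc 0 (n+1) = Finset.range (n+2) by
        rw [← Finset.Ico_add_one_right_eq_Icc, Finset.range_eq_Ico]; rfl, Nat.sum_range_choose]
      simp [List.nil_sublist]
    | cons a t =>
      rw [step, ih, ih, List.length_cons, pascal_sum]

/-- The number of binary sequences of length `n` that contain a fixed binary sequence `s`
of length `m ≤ n` as a (not necessarily contiguous) subsequence equals
`∑_{l=m}^{n} C(n,l)`, the number of binary sequences of length `n` with at least `m` zeroes. -/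
theorem stmt4 (n : ℕ) (s : List Bool) (h : s.length ≤ n) :
    (univ.filter fun S : Fin n → Bool => s.Sublist (List.ofFn S)).card
      = ∑ l ∈ Finset.Icc s.length n, n.choose l := by
  exact aux n s
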